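/- Let C ⊆ F_q^n be a k-dimensional F_q-linear code (1 ≤ k < n), let K be a finite field of characteristic p with q^k elements, let κ : K → Hom_{F_p}(C, F_p) be an F_p-linear isomorphism, write f_λ = κ(λ), and let D ⊆ K^m be an s-dimensional K-linear code (1 ≤ s < m). Let S̄ = {(c_1,…,c_m | d_1,…,d_m) ∈ F_q^{2nm} : (c_1,…,c_m) ∈ ⋂_{Λ∈D} ker(F_Λ), d_1,…,d_m ∈ C^⊥}. Then the trace-symplectic dual S̄^{⊥s} equals {(u_1,…,u_m | v_1,…,v_m) : u_1,…,u_m ∈ C and (v_1,…,v_m) ∈ D^Θ}. -/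

import Mathlib

open Matrix

attribute [local instance] Classical.propDecidable

section Aux

variable {p : ℕ} [Fact p.Prime] {n : ℕ} {F : Type} [Field F] [Fintype F] [Algebra (ZMod p) F]

/-- `x ↦ (y ↦ x ⬝ᵥ y)` as a linear map into the dual. -/
def dotPhi (F : Type) [Field F] (n : ℕ) : (Fin n → F) →ₗ[F] Module.Dual F (Fin n → F) where
  toFun x :=
    { toFun := fun y => x ⬝ᵥ y
      map_add' := fun y z => dotProduct_add x y z
      map_smul' := fun a y => dotProduct_smul a x y }
  map_add' x y := by ext z; simp [add_dotProduct]
  map_smul' a x := by ext z; simp [smul_dotProduct]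

lemma dotPhi_apply (x y : Fin n → F) : dotPhi F n x y = x ⬝ᵥ y := rfl

lemma dotPhi_injective : Function.Injective (dotPhi F n) := by
  rw [injective_iff_map_eq_zero]
  intro x hx
  funext i
  have := congrArg (fun f => f (Pi.single i 1)) hx
  simpa [dotPhi_apply, dotProduct_single] using this

/-- Double-dual: if `x` is orthogonal to `C^⊥` then `x ∈ C`. -/
lemma mem_of_dual (C : Submodule F (Fin n → F)) (x : Fin n → F)
    (h : ∀ d : Fin n → F, (∀ y ∈ C, d ⬝ᵥ y = 0) → x ⬝ᵥ d = 0) : x ∈ C := by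
  set W : Submodule F (Module.Dual F (Fin n → F)) := C.map (dotPhi F n) with hW
  have hx : dotPhi F n x ∈ W.dualCoannihilator.dualAnnihilator := by
    rw [Submodule.mem_dualAnnihilator]
    intro d hd
    rw [Submodule.mem_dualCoannihilator] at hd
    refine h d fun y hy => ?_
    have := hd (dotPhi F n y) ⟨y, hy, rfl⟩
    rwa [dotPhi_apply, dotProduct_comm] at this
  rw [Subspace.dualCoannihilator_dualAnnihilator_eq] at hx
  obtain ⟨y, hy, hyx⟩ := hx
  rwa [← dotPhi_injective hyx]

/-- If `Tr(d ⬝ᵥ x) = 0` for all `d ∈ C^⊥`, then `x ∈ C`. -/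
lemma mem_of_traceDual (C : Submodule F (Fin n → F)) (x : Fin n → F)
    (h : ∀ d : Fin n → F, (∀ y ∈ C, d ⬝ᵥ y = 0) →
      Algebra.trace (ZMod p) F (d ⬝ᵥ x) = 0) : x ∈ C := by
  refine mem_of_dual C x fun d hd => ?_
  rw [dotProduct_comm]
  refine (traceForm_nondegenerate (ZMod p) F).1 (d ⬝ᵥ x) fun α => ?_
  have hsd : ∀ y ∈ C, (α • d) ⬝ᵥ y = 0 := fun y hy => by
    rw [smul_dotProduct, hd y hy, smul_zero]
  have := h (α • d) hsd
  rwa [smul_dotProduct, smul_eq_mul, mul_comm, ← Algebra.traceForm_apply] at this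

/-- `c ↦ Tr(v ⬝ᵥ c)` as a `ZMod p`-linear functional on `C`. -/
noncomputable def trDot (C : Submodule F (Fin n → F)) (v : Fin n → F) : ↥C →ₗ[ZMod p] ZMod p where
  toFun c := Algebra.trace (ZMod p) F (v ⬝ᵥ (c : Fin n → F))
  map_add' a b := by simp [dotProduct_add]
  map_smul' a c := by simp [dotProduct_smul]

lemma trDot_apply (C : Submodule F (Fin n → F)) (v : Fin n → F) (c : ↥C) :
    trDot C v c = Algebra.trace (ZMod p) F (v ⬝ᵥ (c : Fin n → F)) := rfl

variable {K : Type} [Field K] [Fintype K] [Algebra (ZMod p) K]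

/-- `Λ ↦ (c ↦ ∑ i, κ (Λ i) (c i))` as a linear map into the dual of `C^m`. -/
def Tmap (C : Submodule F (Fin n → F)) (κ : K ≃ₗ[ZMod p] (↥C →ₗ[ZMod p] ZMod p)) (m : ℕ) :
    (Fin m → K) →ₗ[ZMod p] Module.Dual (ZMod p) (Fin m → ↥C) where
  toFun Λ := ∑ i, (κ (Λ i)).comp (LinearMap.proj i)
  map_add' Λ Λ' := by
    ext c
    simp [Finset.sum_add_distrib]
  map_smul' a Λ := by
    ext c
    simp [Finset.smul_sum]

lemma Tmap_apply (C : Submodule F (Fin n → F)) (κ : K ≃ₗ[ZMod p] (↥C →ₗ[ZMod p] ZMod p))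
    (m : ℕ) (Λ : Fin m → K) (c : Fin m → ↥C) :
    Tmap C κ m Λ c = ∑ i, κ (Λ i) (c i) := by
  simp [Tmap]

end Aux

/-- the trace-symplectic dual of
`S̄ = {(c|d) : c ∈ ⋂_{Λ∈D} ker F_Λ, d_i ∈ C^⊥}` equals
`{(u|v) : u_i ∈ C, v ∈ D^Θ}`. -/
theorem stmt_8 (p r n k m s : ℕ) [Fact p.Prime] (hr : 0 < r) (hk1 : 1 ≤ k) (hkn : k < n)
    (hs1 : 1 ≤ s) (hsm : s < m)
    (F K : Type) [Field F] [Fintype F] [Algebra (ZMod p) F] (hF : Fintype.card F = p ^ r)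
    [Field K] [Fintype K] [Algebra (ZMod p) K] (hK : Fintype.card K = (p ^ r) ^ k)
    (C : Submodule F (Fin n → F)) (hC : Module.finrank F C = k)
    (κ : K ≃ₗ[ZMod p] (↥C →ₗ[ZMod p] ZMod p))
    (D : Submodule K (Fin m → K)) (hD : Module.finrank K ↥D = s) :
    {uv : (Fin m → Fin n → F) × (Fin m → Fin n → F) |
        ∀ cd : (Fin m → Fin n → F) × (Fin m → Fin n → F),
          ((∃ c : Fin m → ↥C, (∀ i, (c i : Fin n → F) = cd.1 i)
              ∧ ∀ Λ ∈ D, ∑ i : Fin m, κ (Λ i) (c i) = 0)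
            ∧ (∀ i : Fin m, ∀ y ∈ C, cd.2 i ⬝ᵥ y = 0)) →
          Algebra.trace (ZMod p) F
            ((∑ i : Fin m, cd.2 i ⬝ᵥ uv.1 i) - ∑ i : Fin m, uv.2 i ⬝ᵥ cd.1 i) = 0}
    = {uv : (Fin m → Fin n → F) × (Fin m → Fin n → F) |
        (∀ i : Fin m, uv.1 i ∈ C)
        ∧ ∃ Λ ∈ D, ∀ (i : Fin m) (c : ↥C),
            Algebra.trace (ZMod p) F (uv.2 i ⬝ᵥ (c : Fin n → F)) = κ (Λ i) c} := by
  classical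
  ext uv
  simp only [Set.mem_setOf_eq]
  constructor
  · intro H
    constructor
    · -- each u_i ∈ C
      intro i
      refine mem_of_traceDual (p := p) C (uv.1 i) fun d hd => ?_
      have := H ⟨0, (Pi.single i d : Fin m → Fin n → F)⟩
        ⟨⟨0, fun j => rfl, fun Λ _ => by simp⟩, fun j y hy => by
          show (Pi.single i d : Fin m → Fin n → F) j ⬝ᵥ y = 0
          rcases eq_or_ne j i with rfl | hji
          · rw [Pi.single_eq_same]; exact hd y hy
          · rw [Pi.single_eq_of_ne hji, zero_dotProduct]⟩
      have hsum : (∑ j : Fin m, (Pi.single i d : Fin m → Fin n → F) j ⬝ᵥ uv.1 j) = d ⬝ᵥ uv.1 i := by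
        rw [Fintype.sum_eq_single i fun j hji => by
          rw [Pi.single_eq_of_ne hji, zero_dotProduct], Pi.single_eq_same]
      simpa [hsum] using this
    · -- the functional side: v corresponds to some Λ ∈ D
      haveI : FiniteDimensional (ZMod p) ↥C := Module.Finite.of_finite
      set T := Tmap C κ m with hT
      set g : Module.Dual (ZMod p) (Fin m → ↥C) :=
        ∑ i, (trDot C (uv.2 i)).comp (LinearMap.proj i) with hg
      have hg_apply : ∀ c : Fin m → ↥C,
          g c = ∑ i, Algebra.trace (ZMod p) F (uv.2 i ⬝ᵥ ((c i : Fin n → F))) := by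
        intro c; simp [hg, trDot_apply]
      set E : Submodule (ZMod p) (Module.Dual (ZMod p) (Fin m → ↥C)) :=
        (D.restrictScalars (ZMod p)).map T with hE
      have hgE : g ∈ E := by
        rw [← Subspace.dualCoannihilator_dualAnnihilator_eq (W := E)]
        rw [Submodule.mem_dualAnnihilator]
        intro c hc
        rw [Submodule.mem_dualCoannihilator] at hc
        have hcD : ∀ Λ ∈ D, ∑ i, κ (Λ i) (c i) = 0 := by
          intro Λ hΛ
          have := hc (T Λ) ⟨Λ, by simpa using hΛ, rfl⟩
          rwa [hT, Tmap_apply] at this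
        have := H ⟨fun i => (c i : Fin n → F), 0⟩
          ⟨⟨c, fun i => rfl, hcD⟩, fun i y _ => zero_dotProduct y⟩
        simp only [Pi.zero_apply, zero_dotProduct, Finset.sum_const_zero, zero_sub,
          map_neg, map_sum, neg_eq_zero] at this
        rw [hg_apply]
        exact this
      obtain ⟨Λ, hΛD, hΛg⟩ := hgE
      refine ⟨Λ, by simpa using hΛD, fun i c => ?_⟩
      have h := LinearMap.congr_fun hΛg (Pi.single i c : Fin m → ↥C)
      rw [hT, Tmap_apply, hg_apply] at h
      have h1 : (∑ j, κ (Λ j) ((Pi.single i c : Fin m → ↥C) j)) = κ (Λ i) c := by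
        rw [Fintype.sum_eq_single i fun j hji => by
          rw [Pi.single_eq_of_ne hji, map_zero], Pi.single_eq_same]
      have h2 : (∑ j, Algebra.trace (ZMod p) F (uv.2 j ⬝ᵥ (((Pi.single i c : Fin m → ↥C) j : ↥C) : Fin n → F)))
          = Algebra.trace (ZMod p) F (uv.2 i ⬝ᵥ (c : Fin n → F)) := by
        rw [Fintype.sum_eq_single i fun j hji => by
          rw [Pi.single_eq_of_ne hji, ZeroMemClass.coe_zero, dotProduct_zero, map_zero],
          Pi.single_eq_same]
      rw [h1, h2] at h
      exact h.symm
  · rintro ⟨hu, Λ, hΛ, hv⟩ cd ⟨⟨c, hc1, hc2⟩, hd⟩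
    have h1 : ∀ i : Fin m, cd.2 i ⬝ᵥ uv.1 i = 0 := fun i => hd i (uv.1 i) (hu i)
    have h2 : (∑ i, Algebra.trace (ZMod p) F (uv.2 i ⬝ᵥ cd.1 i)) = 0 := by
      have : ∀ i : Fin m, Algebra.trace (ZMod p) F (uv.2 i ⬝ᵥ cd.1 i) = κ (Λ i) (c i) := by
        intro i; rw [← hc1 i]; exact hv i (c i)
      rw [Finset.sum_congr rfl fun i _ => this i]
      exact hc2 Λ hΛ
    rw [map_sub, map_sum, map_sum]
    simp only [h1, map_zero, Finset.sum_const_zero, zero_sub, neg_eq_zero]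
    exact h2
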